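/- Let H₁, H₂ be Hilbert spaces, S : H₁ → H₂ a bounded linear operator, and (e_i)_{i ∈ ℕ} an orthonormal basis of H₁ such that the images (S e_i) are mutually orthogonal. Then S is a compact operator if and only if ‖S e_i‖ → 0 as i → ∞. -/

import Mathlib

open Filter Metric

/-- A rank-one operator is compact. -/
lemma aux_rankOne_compact {H₁ H₂ : Type*} [NormedAddCommGroup H₁] [NormedSpace ℂ H₁]
    [NormedAddCommGroup H₂] [NormedSpace ℂ H₂] (g : H₁ →L[ℂ] ℂ) (w : H₂) :
    IsCompactOperator (g.smulRight w) := by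
  refine ⟨(fun c : ℂ => c • w) '' Metric.closedBall 0 1,
    (isCompact_closedBall (0:ℂ) 1).image (by continuity), ?_⟩
  have h1 : g ⁻¹' Metric.closedBall 0 1 ∈ nhds (0 : H₁) :=
    g.continuous.continuousAt.preimage_mem_nhds
      (by simpa using Metric.closedBall_mem_nhds (0:ℂ) one_pos)
  exact Filter.mem_of_superset h1 fun x hx => ⟨g x, hx, rfl⟩

/-- Pythagoras for finitely many pairwise orthogonal vectors. -/
lemma aux_norm_sum_sq {H : Type*} [NormedAddCommGroup H] [InnerProductSpace ℂ H]
    (t : Finset ℕ) (w : ℕ → H)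
    (h : ∀ i ∈ t, ∀ j ∈ t, i ≠ j → (inner ℂ (w i) (w j) : ℂ) = 0) :
    ‖∑ i ∈ t, w i‖ ^ 2 = ∑ i ∈ t, ‖w i‖ ^ 2 := by
  have h2 : ∀ x : H, ‖x‖ ^ 2 = (inner ℂ x x : ℂ).re := fun x => by
    rw [InnerProductSpace.norm_sq_eq_re_inner (𝕜 := ℂ)]; rfl
  have key : (inner ℂ (∑ i ∈ t, w i) (∑ j ∈ t, w j) : ℂ) = ∑ i ∈ t, (inner ℂ (w i) (w i) : ℂ) := by
    rw [sum_inner]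
    refine Finset.sum_congr rfl fun i hi => ?_
    rw [inner_sum, Finset.sum_eq_single_of_mem i hi]
    intro j hj hne
    exact h i hi j hj hne.symm
  rw [h2, key, Complex.re_sum]
  exact Finset.sum_congr rfl fun i _ => (h2 _).symm

lemma aux_key_bound {H₁ H₂ : Type*}
    [NormedAddCommGroup H₁] [InnerProductSpace ℂ H₁] [CompleteSpace H₁]
    [NormedAddCommGroup H₂] [InnerProductSpace ℂ H₂]
    (e : HilbertBasis ℕ ℂ H₁) (S : H₁ →L[ℂ] H₂)
    (horth : ∀ i j : ℕ, i ≠ j → (inner ℂ (S (e i)) (S (e j)) : ℂ) = 0)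
    (ε : ℝ) (hε : 0 ≤ ε) (t : Finset ℕ) (ht : ∀ i ∈ t, ‖S (e i)‖ ≤ ε) (x : H₁) :
    ‖∑ i ∈ t, e.repr x i • S (e i)‖ ≤ ε * ‖x‖ := by
  have h1 : ‖∑ i ∈ t, e.repr x i • S (e i)‖ ^ 2 = ∑ i ∈ t, ‖e.repr x i • S (e i)‖ ^ 2 :=
    aux_norm_sum_sq t _ (fun i hi j hj hij => by
      rw [inner_smul_left, inner_smul_right, horth i j hij, mul_zero, mul_zero])
  have h2 : ∑ i ∈ t, ‖e.repr x i • S (e i)‖ ^ 2 ≤ ε ^ 2 * ‖x‖ ^ 2 := by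
    calc ∑ i ∈ t, ‖e.repr x i • S (e i)‖ ^ 2
        ≤ ∑ i ∈ t, ε ^ 2 * ‖e.repr x i‖ ^ 2 := by
          refine Finset.sum_le_sum fun i hi => ?_
          rw [norm_smul, mul_pow]
          have h3 := ht i hi
          have h4 : ‖S (e i)‖ ^ 2 ≤ ε ^ 2 := by nlinarith [norm_nonneg (S (e i))]
          calc ‖e.repr x i‖ ^ 2 * ‖S (e i)‖ ^ 2
              ≤ ‖e.repr x i‖ ^ 2 * ε ^ 2 :=
                mul_le_mul_of_nonneg_left h4 (sq_nonneg _)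
            _ = ε ^ 2 * ‖e.repr x i‖ ^ 2 := mul_comm _ _
      _ = ε ^ 2 * ∑ i ∈ t, ‖e.repr x i‖ ^ 2 := (Finset.mul_sum _ _ _).symm
      _ ≤ ε ^ 2 * ‖x‖ ^ 2 := by
          refine mul_le_mul_of_nonneg_left ?_ (sq_nonneg ε)
          simpa [e.repr_apply_apply] using e.orthonormal.sum_inner_products_le (s := t) x
  nlinarith [norm_nonneg (∑ i ∈ t, e.repr x i • S (e i)), mul_nonneg hε (norm_nonneg x)]

theorem stmt4 {H₁ H₂ : Type*}
    [NormedAddCommGroup H₁] [InnerProductSpace ℂ H₁] [CompleteSpace H₁]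
    [NormedAddCommGroup H₂] [InnerProductSpace ℂ H₂] [CompleteSpace H₂]
    (e : HilbertBasis ℕ ℂ H₁) (S : H₁ →L[ℂ] H₂)
    (horth : ∀ i j : ℕ, i ≠ j → (inner ℂ (S (e i)) (S (e j)) : ℂ) = 0) :
    IsCompactOperator S ↔
      Filter.Tendsto (fun i : ℕ => ‖S (e i)‖) Filter.atTop (nhds 0) := by
  constructor
  · -- compact → norms tend to 0
    intro hS
    by_contra hcon
    rw [Metric.tendsto_atTop] at hcon
    push_neg at hcon
    obtain ⟨ε, hε, hfreq⟩ := hcon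
    have hfreq' : ∃ᶠ n in Filter.atTop, ε ≤ ‖S (e n)‖ := by
      rw [Filter.frequently_atTop]
      intro N
      obtain ⟨n, hn, h⟩ := hfreq N
      exact ⟨n, hn, by simpa [Real.dist_eq, abs_of_nonneg (norm_nonneg _)] using h⟩
    obtain ⟨φ, hφ, hφε⟩ := Filter.extraction_of_frequently_atTop hfreq'
    obtain ⟨K, hKc, hKmem⟩ := hS
    obtain ⟨r, hr, hball⟩ := Metric.mem_nhds_iff.1 hKmem
    set c : ℂ := ((r / 2 : ℝ) : ℂ) with hc
    have hcn : ‖c‖ = r / 2 := by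
      rw [hc, Complex.norm_real, Real.norm_eq_abs, abs_of_pos (half_pos hr)]
    set v : ℕ → H₂ := fun k => c • S (e (φ k)) with hv
    have hvK : ∀ k, v k ∈ K := by
      intro k
      have hmem : c • e (φ k) ∈ Metric.ball (0 : H₁) r := by
        rw [Metric.mem_ball, dist_zero_right, norm_smul, hcn,
          e.orthonormal.1 (φ k), mul_one]
        linarith
      have := hball hmem
      simpa [hv, map_smul] using this
    obtain ⟨a, _, ψ, hψ, hconv⟩ := hKc.tendsto_subseq hvK
    have hcauchy : CauchySeq (v ∘ ψ) := hconv.cauchySeq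
    set δ : ℝ := r / 2 * ε with hδ
    have hδ0 : 0 < δ := mul_pos (half_pos hr) hε
    obtain ⟨N, hN⟩ := Metric.cauchySeq_iff.1 hcauchy δ hδ0
    have hdist := hN N le_rfl (N + 1) (Nat.le_succ N)
    set i := φ (ψ N) with hi
    set j := φ (ψ (N + 1)) with hj
    have hij : i ≠ j := (hφ (hψ (Nat.lt_succ_self N))).ne
    have hinner : (inner ℂ (c • S (e i)) (c • S (e j)) : ℂ) = 0 := by
      rw [inner_smul_left, inner_smul_right, horth i j hij, mul_zero, mul_zero]
    have hsq : ‖c • S (e i) - c • S (e j)‖ ^ 2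
        = ‖c • S (e i)‖ ^ 2 + ‖c • S (e j)‖ ^ 2 := by
      rw [@norm_sub_sq ℂ, hinner]
      simp
    have hni : δ ≤ ‖c • S (e i)‖ := by
      rw [norm_smul, hcn, hδ]
      exact mul_le_mul_of_nonneg_left (hφε (ψ N)) (le_of_lt (half_pos hr))
    have hnj : δ ≤ ‖c • S (e j)‖ := by
      rw [norm_smul, hcn, hδ]
      exact mul_le_mul_of_nonneg_left (hφε (ψ (N + 1))) (le_of_lt (half_pos hr))
    rw [Function.comp, Function.comp, dist_eq_norm] at hdist
    have hdist' : ‖c • S (e i) - c • S (e j)‖ < δ := hdist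
    nlinarith [norm_nonneg (c • S (e i) - c • S (e j))]
  · -- norms tend to 0 → compact
    intro htend
    set T : ℕ → H₁ →L[ℂ] H₂ :=
      fun n => ∑ i ∈ Finset.range n, ((innerSL ℂ (e i)).smulRight (S (e i))) with hT
    have hTapp : ∀ n x, T n x = ∑ i ∈ Finset.range n, e.repr x i • S (e i) := by
      intro n x
      simp [hT, ContinuousLinearMap.sum_apply, ContinuousLinearMap.smulRight_apply,
        e.repr_apply_apply]
    have hcompact : ∀ n, IsCompactOperator (T n) := by
      intro n
      rw [hT]
      refine Finset.sum_induction _ (fun f : H₁ →L[ℂ] H₂ => IsCompactOperator f) ?_ ?_ ?_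
      · intro f g hf hg
        have := hf.add hg
        rwa [show (⇑f + ⇑g) = ⇑(f + g) from rfl] at this
      · have : IsCompactOperator (0 : H₁ → H₂) := isCompactOperator_zero
        rwa [show (0 : H₁ → H₂) = ⇑(0 : H₁ →L[ℂ] H₂) from rfl] at this
      · intro i _
        exact aux_rankOne_compact _ _
    have htends : Filter.Tendsto T Filter.atTop (nhds S) := by
      rw [Metric.tendsto_atTop]
      intro ε hε
      obtain ⟨N, hNs⟩ := Metric.tendsto_atTop.1 htend (ε / 2) (half_pos hε)
      have hNs' : ∀ i ≥ N, ‖S (e i)‖ ≤ ε / 2 := by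
        intro i hi
        have := hNs i hi
        rw [Real.dist_eq, sub_zero, abs_of_nonneg (norm_nonneg _)] at this
        exact this.le
      refine ⟨N, fun n hn => ?_⟩
      rw [dist_eq_norm]
      have hb : ‖T n - S‖ ≤ ε / 2 := by
        refine ContinuousLinearMap.opNorm_le_bound _ (le_of_lt (half_pos hε)) fun x => ?_
        have hsum : HasSum (fun i => e.repr x i • S (e i)) (S x) := by
          have h0 := (e.hasSum_repr x).mapL S
          simpa [map_smul] using h0
        have h4 : Filter.Tendsto
            (fun s : Finset ℕ => ‖(∑ i ∈ s, e.repr x i • S (e i)) - T n x‖)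
            Filter.atTop (nhds ‖S x - T n x‖) :=
          ((hsum.sub_const (T n x)).norm : _)
        have h5 : ∀ᶠ s : Finset ℕ in Filter.atTop,
            ‖(∑ i ∈ s, e.repr x i • S (e i)) - T n x‖ ≤ ε / 2 * ‖x‖ := by
          filter_upwards [Filter.eventually_ge_atTop (Finset.range n)] with s hs
          rw [hTapp, ← Finset.sum_sdiff hs, add_sub_cancel_right]
          refine aux_key_bound e S horth (ε / 2) (le_of_lt (half_pos hε)) _ ?_ x
          intro i hi
          have hin : n ≤ i := by
            by_contra hlt
            exact (Finset.mem_sdiff.1 hi).2 (Finset.mem_range.2 (lt_of_not_ge hlt))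
          exact hNs' i (le_trans hn hin)
        have h6 : ‖S x - T n x‖ ≤ ε / 2 * ‖x‖ := le_of_tendsto h4 h5
        rw [ContinuousLinearMap.sub_apply, ← norm_neg, neg_sub]
        exact h6
      linarith
    exact isCompactOperator_of_tendsto htends (Filter.Eventually.of_forall hcompact)
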